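/- Let M be a smooth manifold and let C^∞_c(M,ℂ) be the non-unital algebra of compactly supported smooth complex-valued functions on M. Then every nonzero (non-unital) ℂ-algebra homomorphism η : C^∞_c(M,ℂ) → ℂ is evaluation at a point: there exists a unique x ∈ M such that η(f) = f(x) for all f ∈ C^∞_c(M,ℂ). -/

import Mathlib

open Bundle Manifold
open scoped TensorProduct

local notation "∞" => (⊤ : ℕ∞)

set_option maxHeartbeats 1000000
set_option synthInstance.maxHeartbeats 400000

noncomputable section

/-- Complex multiplication and addition are smooth over `ℝ`, so that the complex-valued smooth
functions on a real manifold form a (comm)ring. -/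
instance : ContMDiffRing 𝓘(ℝ, ℂ) (⊤ : ℕ∞) ℂ where
  contMDiff_add := by
    rw [contMDiff_iff]
    refine ⟨continuous_add, fun x y => ?_⟩
    simp only [mfld_simps, chartAt_self_eq]
    rw [contDiffOn_univ]
    exact contDiff_add
  contMDiff_mul := by
    rw [contMDiff_iff]
    refine ⟨continuous_mul, fun x y => ?_⟩
    simp only [mfld_simps, chartAt_self_eq]
    rw [contDiffOn_univ]
    exact contDiff_mul

variable {EM : Type*} [NormedAddCommGroup EM] [NormedSpace ℝ EM] [FiniteDimensional ℝ EM]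
  {HM : Type*} [TopologicalSpace HM] {IM : ModelWithCorners ℝ EM HM}
  {M : Type*} [TopologicalSpace M] [ChartedSpace HM M] [IsManifold IM (⊤ : ℕ∞) M]
  [T2Space M] [SecondCountableTopology M]

/-- The constant functions make the smooth complex-valued functions a `ℂ`-algebra. -/
instance : Algebra ℂ C^∞⟮IM, M; 𝓘(ℝ, ℂ), ℂ⟯ :=
  RingHom.toAlgebra
    { toFun := fun c => ⟨fun _ => c, contMDiff_const⟩
      map_one' := rfl
      map_mul' := fun _ _ => rfl
      map_zero' := rfl
      map_add' := fun _ _ => rfl }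

/-- The non-unital subalgebra of compactly supported smooth complex-valued functions. -/
def SmoothMap.compactlySupported (IM : ModelWithCorners ℝ EM HM) (M : Type*) [TopologicalSpace M]
    [ChartedSpace HM M] [IsManifold IM (⊤ : ℕ∞) M] :
    NonUnitalSubalgebra ℂ C^∞⟮IM, M; 𝓘(ℝ, ℂ), ℂ⟯ where
  carrier := {f | HasCompactSupport (f : M → ℂ)}
  add_mem' hf hg := hf.add hg
  zero_mem' := by
    simpa only [Set.mem_ofPred_eq, ContMDiffMap.coe_zero] using (HasCompactSupport.zero : HasCompactSupport (0 : M → ℂ))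
  mul_mem' hf hg := hf.mul_right
  smul_mem' c f hf := hf.mul_left

/-- Inversion on `ℂ` is smooth over `ℝ` away from zero. -/
instance : ContMDiffInv₀ 𝓘(ℝ, ℂ) ∞ ℂ where
  contMDiffAt_inv₀ x hx := by
    rw [contMDiffAt_iff_contDiffAt]
    exact contDiffAt_inv ℝ hx

/-- A compactly supported smooth bump function: equal to `1` at `x`, supported inside
an arbitrary open neighbourhood `U` of `x`. -/
theorem exists_bump_aux (x : M) {U : Set M} (hU : IsOpen U) (hxU : x ∈ U) :
    ∃ f : SmoothMap.compactlySupported IM M,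
      (f : C^∞⟮IM, M; 𝓘(ℝ, ℂ), ℂ⟯) x = 1 ∧
      ∀ y, y ∉ U → (f : C^∞⟮IM, M; 𝓘(ℝ, ℂ), ℂ⟯) y = 0 := by
  have : LocallyCompactSpace M := Manifold.locallyCompact_of_finiteDimensional IM
  have : SigmaCompactSpace M := inferInstance
  obtain ⟨K, hK, hxK, hKU⟩ := exists_compact_subset hU hxU
  obtain ⟨f, hf0, hf1, -⟩ := exists_contMDiffMap_zero_one_of_isClosed (n := ∞) IM
    (isClosed_compl_iff.2 isOpen_interior) isClosed_singleton
    (Set.disjoint_singleton_right.2 (by simpa using hxK))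
  have hsupp : HasCompactSupport (fun y => (f y : ℂ)) := by
    apply HasCompactSupport.intro hK
    intro y hy
    have h0 : f y = 0 := hf0 (fun h => hy (interior_subset h))
    simp [h0]
  refine ⟨⟨⟨fun y => (f y : ℂ),
      (Complex.ofRealCLM.contDiff.contMDiff).comp f.contMDiff⟩, hsupp⟩, ?_, ?_⟩
  · have h1 : f x = 1 := hf1 rfl
    show ((f x : ℝ) : ℂ) = 1
    simp [h1]
  · intro y hy
    have h0 : f y = 0 := hf0 (fun h => hy (hKU (interior_subset h)))
    show ((f y : ℝ) : ℂ) = 0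
    simp [h0]

/-- The complex conjugate of a compactly supported smooth function. -/
def conjElem (f : SmoothMap.compactlySupported IM M) : SmoothMap.compactlySupported IM M :=
  ⟨⟨fun y => (starRingEnd ℂ) ((f : C^∞⟮IM, M; 𝓘(ℝ, ℂ), ℂ⟯) y),
    (Complex.conjCLE.contDiff.contMDiff).comp (f : C^∞⟮IM, M; 𝓘(ℝ, ℂ), ℂ⟯).contMDiff⟩,
   by
     show HasCompactSupport (fun y => (starRingEnd ℂ) ((f : C^∞⟮IM, M; 𝓘(ℝ, ℂ), ℂ⟯) y))
     exact HasCompactSupport.comp_left (g := starRingEnd ℂ) f.2 (map_zero _)⟩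

/-- Every nonzero `ℂ`-algebra homomorphism from the non-unital algebra of compactly supported
smooth complex-valued functions on a manifold to `ℂ` is evaluation at a unique point. -/
theorem nonUnitalAlgHom_eq_eval
    (η : SmoothMap.compactlySupported IM M →ₙₐ[ℂ] ℂ) (hη : η ≠ 0) :
    ∃! x : M, ∀ f : SmoothMap.compactlySupported IM M, η f = (f : C^∞⟮IM, M; 𝓘(ℝ, ℂ), ℂ⟯) x := by
  classical
  obtain ⟨g₀, hg₀⟩ : ∃ g₀ : SmoothMap.compactlySupported IM M, η g₀ ≠ 0 := by
    by_contra h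
    push_neg at h
    exact hη (DFunLike.ext _ _ fun f => by simpa using h f)
  set g : SmoothMap.compactlySupported IM M := (η g₀)⁻¹ • g₀ with hgdef
  have hg : η g = 1 := by
    rw [hgdef, map_smul, smul_eq_mul, inv_mul_cancel₀ hg₀]
  -- Key claim: there is a common zero of the kernel of `η`.
  have key : ∃ x : M, ∀ f : SmoothMap.compactlySupported IM M, η f = 0 → f.1 x = 0 := by
    by_contra hcon
    push_neg at hcon
    choose F hF0 hFx using hcon
    set K : Set M := tsupport (g.1 : M → ℂ) with hKdef
    have hKcl : IsClosed K := isClosed_tsupport _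
    have hK : IsCompact K := g.2
    have hcov : K ⊆ ⋃ x : M, (fun y => (F x).1 y) ⁻¹' {z : ℂ | z ≠ 0} := fun y _ =>
      Set.mem_iUnion.2 ⟨y, hFx y⟩
    obtain ⟨t, ht⟩ := hK.elim_finite_subcover
      (fun x : M => (fun y => (F x).1 y) ⁻¹' {z : ℂ | z ≠ 0})
      (fun x => isOpen_ne.preimage (F x).1.contMDiff.continuous) hcov
    set p : M → SmoothMap.compactlySupported IM M := fun x => F x * conjElem (F x) with hpdef
    set h : SmoothMap.compactlySupported IM M := ∑ i ∈ t, p i with hhdef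
    have hη_h : η h = 0 := by
      rw [hhdef, map_sum]
      exact Finset.sum_eq_zero fun i _ => by rw [hpdef, map_mul, hF0, zero_mul]
    have hval : ∀ y : M, h.1 y = ∑ i ∈ t, (F i).1 y * (starRingEnd ℂ) ((F i).1 y) := by
      intro y
      have h1 : (h : C^∞⟮IM, M; 𝓘(ℝ, ℂ), ℂ⟯) = ∑ i ∈ t, ((p i : C^∞⟮IM, M; 𝓘(ℝ, ℂ), ℂ⟯)) :=
        AddSubmonoidClass.coe_finset_sum p t
      calc h.1 y = (∑ i ∈ t, ((p i : C^∞⟮IM, M; 𝓘(ℝ, ℂ), ℂ⟯))) y := by rw [← h1]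
        _ = ∑ i ∈ t, (p i).1 y := map_sum (ContMDiffMap.evalRingHom y) _ t
        _ = ∑ i ∈ t, (F i).1 y * (starRingEnd ℂ) ((F i).1 y) := by
            refine Finset.sum_congr rfl fun i _ => ?_
            rw [hpdef]
            rfl
    have hpos : ∀ y ∈ K, h.1 y ≠ 0 := by
      intro y hy
      obtain ⟨i, hit, hi⟩ := Set.mem_iUnion₂.1 (ht hy)
      have hsum : h.1 y = ((∑ i ∈ t, Complex.normSq ((F i).1 y) : ℝ) : ℂ) := by
        rw [hval]
        push_cast
        exact Finset.sum_congr rfl fun i _ => Complex.mul_conj _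
      have hgt : 0 < ∑ i ∈ t, Complex.normSq ((F i).1 y) :=
        Finset.sum_pos' (fun i _ => Complex.normSq_nonneg _)
          ⟨i, hit, Complex.normSq_pos.2 hi⟩
      rw [hsum]
      exact_mod_cast hgt.ne'
    -- the smooth compactly supported "inverse" of h on the support of g
    set u : M → ℂ := fun y => if h.1 y = 0 then 0 else g.1 y / h.1 y with hu
    have hg_of_h : ∀ y, h.1 y = 0 → g.1 y = 0 := fun y hy =>
      image_eq_zero_of_notMem_tsupport fun hyK => hpos y hyK hy
    have hu_smooth : ContMDiff IM 𝓘(ℝ, ℂ) ∞ u := by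
      intro y₀
      by_cases h0 : h.1 y₀ = 0
      · have hy₀K : y₀ ∉ K := fun hy => hpos y₀ hy h0
        have hev : (fun _ : M => (0 : ℂ)) =ᶠ[nhds y₀] u := by
          filter_upwards [hKcl.isOpen_compl.mem_nhds hy₀K] with y hy
          by_cases hz : h.1 y = 0
          · simp [hu, hz]
          · simp [hu, hz, image_eq_zero_of_notMem_tsupport hy]
        exact (contMDiffAt_const (c := (0 : ℂ))).congr_of_eventuallyEq hev.symm
      · have hdiv : ContMDiffAt IM 𝓘(ℝ, ℂ) ∞ (fun y => g.1 y / h.1 y) y₀ :=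
          (g.1.contMDiff y₀).div₀ (h.1.contMDiff y₀) h0
        refine hdiv.congr_of_eventuallyEq ?_
        filter_upwards [(isOpen_ne.preimage h.1.contMDiff.continuous).mem_nhds h0] with y hy
        simp only [hu]
        rw [if_neg hy]
    have hu_supp : HasCompactSupport u := by
      have hsub : Function.support u ⊆ K := by
        intro y hy
        by_cases hz : h.1 y = 0
        · exact absurd (by simp [hu, hz]) hy
        · have : g.1 y ≠ 0 := by
            intro hgy
            exact hy (by simp [hu, hgy])
          exact subset_closure this
      exact IsCompact.of_isClosed_subset hK (isClosed_tsupport u)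
        (closure_minimal hsub hKcl)
    set U : SmoothMap.compactlySupported IM M := ⟨⟨u, hu_smooth⟩, hu_supp⟩ with hUdef
    have hgU : g = U * h := by
      apply Subtype.ext
      apply ContMDiffMap.ext
      intro y
      have : (U * h).1 y = u y * h.1 y := rfl
      rw [this]
      by_cases hz : h.1 y = 0
      · rw [hz, mul_zero]
        exact hg_of_h y hz
      · simp only [hu]
        rw [if_neg hz, div_mul_cancel₀ _ hz]
    have : (1 : ℂ) = 0 := by rw [← hg, hgU, map_mul, hη_h, mul_zero]
    exact one_ne_zero this
  obtain ⟨x, hx⟩ := key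
  have formula : ∀ f : SmoothMap.compactlySupported IM M, f.1 x = η f * g.1 x := by
    intro f
    have h1 : η (f + (-η f) • g) = 0 := by
      rw [map_add, map_smul, hg, smul_eq_mul, mul_one, add_neg_cancel]
    have h2 := hx _ h1
    have h3 : (f + (-η f) • g).1 x = f.1 x + (-η f) * g.1 x := rfl
    rw [h3] at h2
    linear_combination h2
  have hgx : g.1 x = 1 := by
    have h2 := formula (g * g)
    have h4 : (g * g).1 x = g.1 x * g.1 x := rfl
    rw [h4, map_mul, hg, one_mul] at h2
    -- h2 : g.1 x * g.1 x = g.1 x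
    rcases mul_eq_zero.1 (by linear_combination h2 : g.1 x * (g.1 x - 1) = 0) with h5 | h5
    · exfalso
      obtain ⟨b, hb1, -⟩ := exists_bump_aux (IM := IM) x isOpen_univ (Set.mem_univ x)
      have := formula b
      rw [h5, mul_zero] at this
      rw [hb1] at this
      exact one_ne_zero this
    · exact sub_eq_zero.1 h5
  refine ⟨x, fun f => by rw [formula f, hgx, mul_one], ?_⟩
  intro y hy
  by_contra hne
  obtain ⟨b, hb1, hb0⟩ := exists_bump_aux (IM := IM) y (isOpen_compl_singleton : IsOpen ({x} : Set M)ᶜ) hne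
  have h3 := formula b
  rw [hgx, mul_one] at h3
  have hbx : (b : C^∞⟮IM, M; 𝓘(ℝ, ℂ), ℂ⟯) x = 0 := hb0 x (fun hx' => hx' rfl)
  rw [hbx, hy b, hb1] at h3
  exact one_ne_zero h3.symm

end
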